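/- For a permutation π of {1,…,n} chosen uniformly at random (n ≥ 1), the probability that the permutation game (I, I^π) has exactly one Nash equilibrium equals 1/n. Equivalently, the number of permutations of {1,…,n} consisting of a single cycle (one orbit on {1,…,n}) is (n−1)!. -/

import Mathlib

open Matrix BigOperators

/-- A mixed strategy: nonnegative entries summing to 1. -/
def IsMixed {I : Type*} [Fintype I] (x : I → ℝ) : Prop :=
  (∀ i, 0 ≤ x i) ∧ ∑ i, x i = 1

/-- `(x, y)` is a Nash equilibrium of the bimatrix game `(A, B)`. -/
def IsNash {I J : Type*} [Fintype I] [Fintype J]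
    (A B : Matrix I J ℝ) (x : I → ℝ) (y : J → ℝ) : Prop :=
  IsMixed x ∧ IsMixed y ∧
  (∀ x' : I → ℝ, IsMixed x' → x' ⬝ᵥ (A *ᵥ y) ≤ x ⬝ᵥ (A *ᵥ y)) ∧
  (∀ y' : J → ℝ, IsMixed y' → x ⬝ᵥ (B *ᵥ y') ≤ x ⬝ᵥ (B *ᵥ y))

/-- The matrix `I^π` whose `i`-th row is the transpose of the `π(i)`-th
standard unit vector. -/
def permMatrix {n : ℕ} (π : Equiv.Perm (Fin n)) : Matrix (Fin n) (Fin n) ℝ :=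
  Matrix.of fun i j => if j = π i then 1 else 0

/-- The number of orbits of `π` on `{1,…,n}` (cycles of `π`, including fixed
points): the number of distinct `SameCycle`-classes. -/
noncomputable def numOrbits {n : ℕ} (π : Equiv.Perm (Fin n)) : ℕ :=
  {s : Set (Fin n) | ∃ i, s = {j | π.SameCycle i j}}.ncard

section Aux

open Equiv Finset

variable {n : ℕ}

theorem Equiv.Perm.apply_inv_self {α : Type*} (f : Equiv.Perm α) (x : α) : f (f⁻¹ x) = x :=
  Equiv.apply_symm_apply f x

theorem Equiv.Perm.inv_apply_self {α : Type*} (f : Equiv.Perm α) (x : α) : f⁻¹ (f x) = x :=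
  Equiv.symm_apply_apply f x

lemma dot_le {x v : Fin n → ℝ} (hx : IsMixed x) {M : ℝ} (h : ∀ a, v a ≤ M) :
    x ⬝ᵥ v ≤ M := by
  calc x ⬝ᵥ v = ∑ a, x a * v a := rfl
    _ ≤ ∑ a, x a * M :=
        Finset.sum_le_sum fun a _ => mul_le_mul_of_nonneg_left (h a) (hx.1 a)
    _ = M := by rw [← Finset.sum_mul, hx.2, one_mul]

lemma pure_mixed (a₀ : Fin n) : IsMixed (fun a => if a = a₀ then (1:ℝ) else 0) := by
  constructor
  · intro a; dsimp only; split <;> norm_num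
  · simp

lemma pure_dot (a₀ : Fin n) (v : Fin n → ℝ) :
    (fun a => if a = a₀ then (1:ℝ) else 0) ⬝ᵥ v = v a₀ := by
  simp [dotProduct, ite_mul]

lemma mixed_exists_pos {x : Fin n → ℝ} (hx : IsMixed x) : ∃ a, 0 < x a := by
  by_contra h
  push_neg at h
  have h1 : ∑ a, x a ≤ 0 := Finset.sum_nonpos fun a _ => h a
  rw [hx.2] at h1
  linarith

/-- If `x` is a best response against payoff vector `v`, then `x` is supported
on maximizers of `v`. -/
lemma br_max {x v : Fin n → ℝ} (hx : IsMixed x)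
    (hbr : ∀ x', IsMixed x' → x' ⬝ᵥ v ≤ x ⬝ᵥ v) {a : Fin n} (ha : 0 < x a)
    (b : Fin n) : v b ≤ v a := by
  obtain ⟨a₀, -, hmax⟩ :=
    Finset.exists_max_image Finset.univ v ⟨a, Finset.mem_univ a⟩
  have h2 : v a₀ ≤ x ⬝ᵥ v := by
    have := hbr _ (pure_mixed a₀)
    rwa [pure_dot] at this
  have key : v a = v a₀ := by
    by_contra hne
    have hlt : v a < v a₀ := lt_of_le_of_ne (hmax a (Finset.mem_univ a)) hne
    have hstrict : x ⬝ᵥ v < v a₀ := by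
      have : ∑ c, x c * v c < ∑ c, x c * v a₀ := by
        refine Finset.sum_lt_sum
          (fun c _ => mul_le_mul_of_nonneg_left (hmax c (Finset.mem_univ c)) (hx.1 c))
          ⟨a, Finset.mem_univ a, mul_lt_mul_of_pos_left hlt ha⟩
      calc x ⬝ᵥ v = ∑ c, x c * v c := rfl
        _ < ∑ c, x c * v a₀ := this
        _ = v a₀ := by rw [← Finset.sum_mul, hx.2, one_mul]
    exact absurd h2 (not_le.mpr hstrict)
  rw [key]
  exact hmax b (Finset.mem_univ b)

lemma permMatrix_mulVec (π : Equiv.Perm (Fin n)) (v : Fin n → ℝ) :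
    permMatrix π *ᵥ v = fun i => v (π i) := by
  funext i
  simp [permMatrix, Matrix.mulVec, dotProduct, ite_mul]


lemma col_payoff (π : Equiv.Perm (Fin n)) (x y' : Fin n → ℝ) :
    x ⬝ᵥ (permMatrix π *ᵥ y') = (fun b => x (π⁻¹ b)) ⬝ᵥ y' := by
  rw [permMatrix_mulVec]
  show ∑ a, x a * y' (π a) = ∑ b, x (π⁻¹ b) * y' b
  rw [← Equiv.sum_comp π (fun b => x (π⁻¹ b) * y' b)]
  simp

/-- The uniform distribution on a finite set `S`. -/
noncomputable def unif (S : Finset (Fin n)) : Fin n → ℝ :=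
  fun a => if a ∈ S then ((S.card : ℝ))⁻¹ else 0

lemma unif_mixed {S : Finset (Fin n)} (hS : S.Nonempty) : IsMixed (unif S) := by
  have hc : (S.card : ℝ) ≠ 0 := Nat.cast_ne_zero.mpr (Finset.card_ne_zero_of_mem hS.choose_spec)
  constructor
  · intro a; unfold unif; split
    · positivity
    · exact le_refl 0
  · show ∑ a, unif S a = 1
    unfold unif
    rw [Finset.sum_ite_mem, Finset.univ_inter, Finset.sum_const, nsmul_eq_mul,
      mul_inv_cancel₀ hc]

lemma nash_unif (π : Equiv.Perm (Fin n)) (S : Finset (Fin n)) (hS : S.Nonempty)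
    (hinv : ∀ a ∈ S, π a ∈ S) :
    IsNash (1 : Matrix (Fin n) (Fin n) ℝ) (permMatrix π) (unif S) (unif S) := by
  have hmix := unif_mixed hS
  have hcpos : (0:ℝ) < (S.card : ℝ) := by
    exact_mod_cast Finset.card_pos.mpr hS
  have hub : ∀ a, unif S a ≤ (S.card:ℝ)⁻¹ := by
    intro a; unfold unif; split
    · exact le_refl _
    · positivity
  have hself : unif S ⬝ᵥ unif S = (S.card:ℝ)⁻¹ := by
    have hsq : ∀ a, unif S a * unif S a = (S.card:ℝ)⁻¹ * unif S a := by
      intro a; unfold unif; split <;> ring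
    calc unif S ⬝ᵥ unif S = ∑ a, unif S a * unif S a := rfl
      _ = ∑ a, (S.card:ℝ)⁻¹ * unif S a := by simp_rw [hsq]
      _ = (S.card:ℝ)⁻¹ := by rw [← Finset.mul_sum, hmix.2, mul_one]
  have himg : S.image π = S :=
    Finset.eq_of_subset_of_card_le
      (fun b hb => by
        obtain ⟨a, ha, rfl⟩ := Finset.mem_image.mp hb
        exact hinv a ha)
      (le_of_eq (Finset.card_image_of_injective S π.injective).symm)
  refine ⟨hmix, hmix, ?_, ?_⟩
  · intro x' hx'
    rw [Matrix.one_mulVec, hself]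
    exact dot_le hx' hub
  · intro y' hy'
    rw [col_payoff, col_payoff]
    have hw : ∀ b, unif S (π⁻¹ b) = unif S b := by
      intro b
      unfold unif
      have : π⁻¹ b ∈ S ↔ b ∈ S := by
        constructor
        · intro h
          have := hinv _ h
          rwa [Equiv.Perm.apply_inv_self] at this
        · intro h
          have : b ∈ S.image π := himg.symm ▸ h
          obtain ⟨a, ha, rfl⟩ := Finset.mem_image.mp this
          rwa [Equiv.Perm.inv_apply_self]
      by_cases h : b ∈ S
      · rw [if_pos h, if_pos (this.mpr h)]
      · rw [if_neg h, if_neg (fun hh => h (this.mp hh))]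
    have hrw : (fun b => unif S (π⁻¹ b)) = unif S := funext hw
    rw [hrw, hself, dotProduct_comm]
    exact dot_le hy' hub

lemma nash_unique {π : Equiv.Perm (Fin n)} (hfull : ∀ i j : Fin n, π.SameCycle i j)
    {x y : Fin n → ℝ}
    (hN : IsNash (1 : Matrix (Fin n) (Fin n) ℝ) (permMatrix π) x y) :
    x = (fun _ => (n:ℝ)⁻¹) ∧ y = (fun _ => (n:ℝ)⁻¹) := by
  obtain ⟨hx, hy, hrow, hcol⟩ := hN
  have hrow' : ∀ x', IsMixed x' → x' ⬝ᵥ y ≤ x ⬝ᵥ y := by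
    intro x' hx'
    have := hrow x' hx'
    rwa [Matrix.one_mulVec] at this
  set w : Fin n → ℝ := fun b => x (π⁻¹ b) with hw
  have hcol' : ∀ y', IsMixed y' → y' ⬝ᵥ w ≤ y ⬝ᵥ w := by
    intro y' hy'
    have := hcol y' hy'
    rwa [col_payoff, col_payoff, dotProduct_comm w y', dotProduct_comm w y] at this
  have h1 : ∀ a, 0 < x a → ∀ b, y b ≤ y a := fun a ha b => br_max hx hrow' ha b
  have h2 : ∀ b, 0 < y b → ∀ c, w c ≤ w b := fun b hb c => br_max hy hcol' hb c
  obtain ⟨b', hyb'⟩ := mixed_exists_pos hy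
  obtain ⟨a₀, -, hmax⟩ := Finset.exists_max_image Finset.univ y ⟨b', Finset.mem_univ b'⟩
  have ha₀pos : 0 < y a₀ := lt_of_lt_of_le hyb' (hmax b' (Finset.mem_univ b'))
  have npos : 0 < n := b'.pos
  have hcy : π.IsCycleOn ((Finset.univ : Finset (Fin n)) : Set (Fin n)) := by
    rw [Finset.coe_univ]
    exact ⟨π.bijective.bijOn_univ, fun a _ b _ => hfull a b⟩
  -- key step: maximizers of y are closed under π⁻¹
  have step : ∀ c, y c = y a₀ → y (π⁻¹ c) = y a₀ := by
    intro c hc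
    have hyc : 0 < y c := hc ▸ ha₀pos
    obtain ⟨a, hxa⟩ := mixed_exists_pos hx
    have hxpos : 0 < x (π⁻¹ c) := by
      have h3 : w (π a) ≤ w c := h2 c hyc (π a)
      have : w (π a) = x a := by rw [hw]; simp
      rw [this] at h3
      exact lt_of_lt_of_le hxa h3
    exact le_antisymm (hmax _ (Finset.mem_univ _)) (h1 (π⁻¹ c) hxpos a₀)
  have iter : ∀ (k : ℕ) (c : Fin n), y c = y a₀ → y (((π⁻¹) ^ k) c) = y a₀ := by
    intro k
    induction k with
    | zero => intro c hc; simpa using hc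
    | succ k ih =>
        intro c hc
        rw [pow_succ, Equiv.Perm.mul_apply]
        exact ih _ (step c hc)
  have hyconst : ∀ b, y b = y a₀ := by
    intro b
    obtain ⟨i, -, hi⟩ := hcy.exists_pow_eq (Finset.mem_univ b) (Finset.mem_univ a₀)
    have hb : b = ((π⁻¹) ^ i) a₀ := by
      rw [inv_pow]
      have h' := congrArg (fun z => (π ^ i)⁻¹ z) hi
      simp only [Equiv.Perm.inv_apply_self] at h'
      exact h'
    rw [hb]
    exact iter i a₀ rfl
  have hnR : ((n:ℝ)) ≠ 0 := Nat.cast_ne_zero.mpr npos.ne'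
  have hyval : y a₀ = (n:ℝ)⁻¹ := by
    have hsum : ∑ b, y b = 1 := hy.2
    have : (n:ℝ) * y a₀ = 1 := by
      rw [← hsum, Finset.sum_congr rfl (fun b _ => hyconst b), Finset.sum_const,
        Finset.card_univ, Fintype.card_fin, nsmul_eq_mul]
    field_simp
    linarith
  have hyeq : y = fun _ => (n:ℝ)⁻¹ := funext fun b => by rw [hyconst b, hyval]
  have hypos : ∀ b, 0 < y b := by
    intro b
    rw [hyeq]
    positivity
  have hxconst : ∀ c c', x c = x c' := by
    have haux : ∀ c c', x c ≤ x c' := by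
      intro c c'
      have := h2 (π c') (hypos _) (π c)
      rw [hw] at this
      simpa using this
    exact fun c c' => le_antisymm (haux c c') (haux c' c)
  obtain ⟨a, hxa⟩ := mixed_exists_pos hx
  have hxval : x a = (n:ℝ)⁻¹ := by
    have hsum : ∑ b, x b = 1 := hx.2
    have : (n:ℝ) * x a = 1 := by
      rw [← hsum, Finset.sum_congr rfl (fun b _ => hxconst b a), Finset.sum_const,
        Finset.card_univ, Fintype.card_fin, nsmul_eq_mul]
    field_simp
    linarith
  exact ⟨funext fun c => by rw [hxconst c a, hxval], hyeq⟩

end Aux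

section Counting

open Equiv Finset

variable {m : ℕ}

open Fin.NatCast in
lemma finRotate_pow_zero (k : ℕ) :
    ((finRotate (m+1)) ^ k) 0 = ((k : ℕ) : Fin (m+1)) := by
  induction k with
  | zero => simp
  | succ k ih =>
      rw [pow_succ', Equiv.Perm.mul_apply, ih, finRotate_succ_apply, Nat.cast_succ]

open Fin.NatCast in
lemma finRotate_pow_val (a : Fin (m+1)) :
    ((finRotate (m+1)) ^ (a : ℕ)) 0 = a := by
  rw [finRotate_pow_zero, Fin.cast_val_eq_self]

lemma finRotate_sameCycle (a b : Fin (m+1)) :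
    (finRotate (m+1)).SameCycle a b := by
  have h0 : ∀ c : Fin (m+1), (finRotate (m+1)).SameCycle 0 c := by
    intro c
    exact ⟨(c : ℕ), by rw [zpow_natCast]; exact finRotate_pow_val c⟩
  exact (h0 a).symm.trans (h0 b)

lemma card_single_cycle_perms :
    {π : Equiv.Perm (Fin (m+1)) | ∀ j, π.SameCycle 0 j}.ncard = m.factorial := by
  classical
  set r := finRotate (m+1) with hr
  set Φ : Equiv.Perm (Fin (m+1)) → Equiv.Perm (Fin (m+1)) := fun g => g * r * g⁻¹ with hΦ
  set A : Set (Equiv.Perm (Fin (m+1))) := {g | g 0 = 0} with hA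
  set B : Set (Equiv.Perm (Fin (m+1))) := {π | ∀ j, π.SameCycle 0 j} with hB
  have hconj : ∀ (g : Equiv.Perm (Fin (m+1))) z, (g * r * g⁻¹) (g z) = g (r z) := by
    intro g z
    simp [Equiv.Perm.mul_apply]
  -- Φ maps into B
  have hmaps : ∀ g, Φ g ∈ B := by
    intro g j
    obtain ⟨k, hk⟩ := finRotate_sameCycle (g⁻¹ 0) (g⁻¹ j)
    refine ⟨k, ?_⟩
    rw [hΦ]
    show ((g * r * g⁻¹) ^ k) 0 = j
    rw [conj_zpow, Equiv.Perm.mul_apply, Equiv.Perm.mul_apply, hk,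
      Equiv.Perm.apply_inv_self]
  -- Φ is injective on A
  have hinj : Set.InjOn Φ A := by
    intro g hg g' hg' heq
    have claim : ∀ k : ℕ, g ((r ^ k) 0) = g' ((r ^ k) 0) := by
      intro k
      induction k with
      | zero => simp only [pow_zero, Equiv.Perm.one_apply]; rw [hg, hg']
      | succ k ih =>
          rw [pow_succ', Equiv.Perm.mul_apply]
          calc g (r ((r ^ k) 0)) = (g * r * g⁻¹) (g ((r ^ k) 0)) := (hconj g _).symm
            _ = (g' * r * g'⁻¹) (g ((r ^ k) 0)) := by rw [show g * r * g⁻¹ = g' * r * g'⁻¹ from heq]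
            _ = (g' * r * g'⁻¹) (g' ((r ^ k) 0)) := by rw [ih]
            _ = g' (r ((r ^ k) 0)) := hconj g' _
    ext x
    have hcx := claim (x : ℕ)
    rw [hr] at hcx
    rw [finRotate_pow_val] at hcx
    exact congrArg _ hcx
  -- Φ maps A onto B
  have hsurj : B ⊆ Φ '' A := by
    intro σ hσ
    have hall : ∀ i j : Fin (m+1), σ.SameCycle i j := fun i j => (hσ i).symm.trans (hσ j)
    have hcy : σ.IsCycleOn ((Finset.univ : Finset (Fin (m+1))) : Set (Fin (m+1))) := by
      rw [Finset.coe_univ]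
      exact ⟨σ.bijective.bijOn_univ, fun a _ b _ => hall a b⟩
    have hcard : (Finset.univ : Finset (Fin (m+1))).card = m + 1 := by simp
    set f0 : Fin (m+1) → Fin (m+1) := fun k => (σ ^ (k : ℕ)) 0 with hf0
    have hmod : ∀ {i j : ℕ}, i ≡ j [MOD m+1] → (σ ^ i) 0 = (σ ^ j) 0 := by
      intro i j hij
      have := (hcy.pow_apply_eq_pow_apply (a := 0) (Finset.mem_univ 0) (m := i) (n := j))
      rw [hcard] at this
      exact this.mpr hij
    have hinj0 : Function.Injective f0 := by
      intro i j hij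
      have := (hcy.pow_apply_eq_pow_apply (a := 0) (Finset.mem_univ 0)
        (m := (i : ℕ)) (n := (j : ℕ))).mp hij
      rw [hcard] at this
      have h1 : (i : ℕ) % (m+1) = (j : ℕ) % (m+1) := this
      rw [Nat.mod_eq_of_lt i.isLt, Nat.mod_eq_of_lt j.isLt] at h1
      exact Fin.ext h1
    set g : Equiv.Perm (Fin (m+1)) :=
      Equiv.ofBijective f0 (Finite.injective_iff_bijective.mp hinj0) with hg
    have hgapp : ∀ k, g k = (σ ^ (k : ℕ)) 0 := fun k => rfl
    have hg0 : g 0 = 0 := by rw [hgapp]; simp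
    refine ⟨g, hg0, ?_⟩
    have key : ∀ k : Fin (m+1), g (r k) = σ (g k) := by
      intro k
      rw [hgapp, hgapp]
      have hrk : r k = k + 1 := by rw [hr]; exact finRotate_succ_apply k
      rw [hrk]
      have hval : ((k + 1 : Fin (m+1)) : ℕ) = ((k : ℕ) + (1 : Fin (m+1)).val) % (m+1) :=
        Fin.add_def k 1 ▸ rfl
      have hcongr : ((k + 1 : Fin (m+1)) : ℕ) ≡ (k : ℕ) + 1 [MOD m+1] := by
        rw [hval]
        calc ((k : ℕ) + (1 : Fin (m+1)).val) % (m+1)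
            ≡ (k : ℕ) + (1 : Fin (m+1)).val [MOD m+1] := Nat.mod_modEq _ _
          _ ≡ (k : ℕ) + 1 [MOD m+1] := by
              have : (1 : Fin (m+1)).val ≡ 1 [MOD m+1] := by
                rw [Fin.val_one']
                exact Nat.mod_modEq 1 (m+1)
              exact Nat.ModEq.add_left _ this
      rw [hmod hcongr, pow_succ', Equiv.Perm.mul_apply]
    refine Equiv.ext fun x => ?_
    show (g * r * g⁻¹) x = σ x
    rw [Equiv.Perm.mul_apply, Equiv.Perm.mul_apply, key (g⁻¹ x),
      Equiv.Perm.apply_inv_self]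
  have hBimg : B = Φ '' A := by
    apply Set.Subset.antisymm hsurj
    rintro σ ⟨g, -, rfl⟩
    exact hmaps g
  have hAcard : A.ncard = m.factorial := by
    rw [← Nat.card_coe_set_eq]
    have E1 : A ≃ {g : Equiv.Perm (Fin (m+1)) // g 0 = 0} := Equiv.refl _
    have hfst : ∀ g : Equiv.Perm (Fin (m+1)), (Equiv.Perm.decomposeFin g).1 = g 0 := by
      intro g
      conv_rhs => rw [← Equiv.Perm.decomposeFin.symm_apply_apply g]
      rw [show Equiv.Perm.decomposeFin.symm (Equiv.Perm.decomposeFin g)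
          = Equiv.Perm.decomposeFin.symm
            ((Equiv.Perm.decomposeFin g).1, (Equiv.Perm.decomposeFin g).2) from rfl,
        Equiv.Perm.decomposeFin_symm_apply_zero]
    have E2 : {g : Equiv.Perm (Fin (m+1)) // g 0 = 0}
        ≃ {p : Fin (m+1) × Equiv.Perm (Fin m) // p.1 = 0} :=
      Equiv.Perm.decomposeFin.subtypeEquiv (fun g => by rw [hfst])
    have E3 : {p : Fin (m+1) × Equiv.Perm (Fin m) // p.1 = 0} ≃ Equiv.Perm (Fin m) :=
      { toFun := fun p => p.1.2
        invFun := fun e => ⟨(0, e), rfl⟩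
        left_inv := by rintro ⟨⟨a, e⟩, (h : a = 0)⟩; subst h; rfl
        right_inv := fun e => rfl }
    rw [Nat.card_congr ((E1.trans E2).trans E3), Nat.card_eq_fintype_card,
      Fintype.card_perm, Fintype.card_fin]
  show B.ncard = m.factorial
  rw [hBimg, Set.ncard_image_of_injOn hinj]
  exact hAcard

end Counting

/-- For a uniformly random permutation `π` of `{1,…,n}` (`n ≥ 1`), the
probability that the permutation game `(I, I^π)` has exactly one Nash
equilibrium equals `1/n`; equivalently, the number of single-cycle permutations
is `(n−1)!`. -/
theorem stmt9 {n : ℕ} (hn : 1 ≤ n) :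
    (({π : Equiv.Perm (Fin n) |
        {p : (Fin n → ℝ) × (Fin n → ℝ) |
          IsNash (1 : Matrix (Fin n) (Fin n) ℝ) (permMatrix π) p.1 p.2}.ncard = 1}.ncard : ℝ)
      / n.factorial = 1 / n) ∧
    {π : Equiv.Perm (Fin n) | numOrbits π = 1}.ncard = (n - 1).factorial := by
  classical
  obtain ⟨m, rfl⟩ : ∃ m, n = m + 1 := ⟨n - 1, by omega⟩
  -- the Nash-uniqueness set equals the single-cycle set
  have hsets : {π : Equiv.Perm (Fin (m+1)) |
      {p : (Fin (m+1) → ℝ) × (Fin (m+1) → ℝ) |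
        IsNash (1 : Matrix (Fin (m+1)) (Fin (m+1)) ℝ) (permMatrix π) p.1 p.2}.ncard = 1}
      = {π : Equiv.Perm (Fin (m+1)) | ∀ j, π.SameCycle 0 j} := by
    ext π
    simp only [Set.mem_setOf_eq]
    constructor
    · intro h
      by_contra hnot
      push_neg at hnot
      obtain ⟨j0, hj0⟩ := hnot
      set S : Finset (Fin (m+1)) := Finset.univ.filter (fun j => π.SameCycle 0 j) with hS
      have h0S : (0 : Fin (m+1)) ∈ S := by
        rw [hS]; exact Finset.mem_filter.mpr ⟨Finset.mem_univ _, Equiv.Perm.SameCycle.refl π 0⟩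
      have hSne : S.Nonempty := ⟨0, h0S⟩
      have hSinv : ∀ a ∈ S, π a ∈ S := by
        intro a ha
        rw [hS, Finset.mem_filter] at ha ⊢
        exact ⟨Finset.mem_univ _, (Equiv.Perm.sameCycle_apply_right).mpr ha.2⟩
      have hj0S : j0 ∉ S := by
        rw [hS, Finset.mem_filter]
        rintro ⟨-, hc⟩
        exact hj0 hc
      have e1 := nash_unif π S hSne hSinv
      have e2 := nash_unif π Finset.univ Finset.univ_nonempty (fun a _ => Finset.mem_univ _)
      rw [Set.ncard_eq_one] at h
      obtain ⟨p, hp⟩ := h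
      have m1 : ((unif S, unif S) : (Fin (m+1) → ℝ) × (Fin (m+1) → ℝ)) ∈
          {p : (Fin (m+1) → ℝ) × (Fin (m+1) → ℝ) |
            IsNash (1 : Matrix (Fin (m+1)) (Fin (m+1)) ℝ) (permMatrix π) p.1 p.2} := e1
      have m2 : ((unif Finset.univ, unif Finset.univ) :
          (Fin (m+1) → ℝ) × (Fin (m+1) → ℝ)) ∈
          {p : (Fin (m+1) → ℝ) × (Fin (m+1) → ℝ) |
            IsNash (1 : Matrix (Fin (m+1)) (Fin (m+1)) ℝ) (permMatrix π) p.1 p.2} := e2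
      rw [hp] at m1 m2
      have : unif S = unif (Finset.univ : Finset (Fin (m+1))) := by
        have := m1.trans m2.symm
        exact congrArg Prod.fst this
      have hval : unif S j0 = unif (Finset.univ : Finset (Fin (m+1))) j0 := by rw [this]
      rw [show unif S j0 = 0 from if_neg hj0S,
        show unif (Finset.univ : Finset (Fin (m+1))) j0
          = ((Finset.univ : Finset (Fin (m+1))).card : ℝ)⁻¹ from if_pos (Finset.mem_univ _)]
          at hval
      rw [Finset.card_univ, Fintype.card_fin, eq_comm, inv_eq_zero] at hval
      exact_mod_cast (Nat.succ_ne_zero m) (by exact_mod_cast hval)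
    · intro hfull
      have hall : ∀ i j : Fin (m+1), π.SameCycle i j :=
        fun i j => (hfull i).symm.trans (hfull j)
      have hset : {p : (Fin (m+1) → ℝ) × (Fin (m+1) → ℝ) |
          IsNash (1 : Matrix (Fin (m+1)) (Fin (m+1)) ℝ) (permMatrix π) p.1 p.2}
          = {((fun _ => ((m+1 : ℕ):ℝ)⁻¹), (fun _ => ((m+1 : ℕ):ℝ)⁻¹))} := by
        ext p
        simp only [Set.mem_setOf_eq, Set.mem_singleton_iff]
        constructor
        · intro hN
          obtain ⟨h1, h2⟩ := nash_unique hall hN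
          exact Prod.ext h1 h2
        · intro hp
          have huu : unif (Finset.univ : Finset (Fin (m+1))) = fun _ => ((m+1:ℕ):ℝ)⁻¹ := by
            funext a
            rw [show unif (Finset.univ : Finset (Fin (m+1))) a
              = ((Finset.univ : Finset (Fin (m+1))).card : ℝ)⁻¹ from if_pos (Finset.mem_univ _)]
            norm_num
          have := nash_unif π Finset.univ Finset.univ_nonempty (fun a _ => Finset.mem_univ _)
          rw [huu] at this
          rw [hp]
          exact this
      rw [hset]
      exact Set.ncard_singleton _
  -- numOrbits = 1 iff single cycle
  have hsets2 : {π : Equiv.Perm (Fin (m+1)) | numOrbits π = 1}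
      = {π : Equiv.Perm (Fin (m+1)) | ∀ j, π.SameCycle 0 j} := by
    ext π
    simp only [Set.mem_setOf_eq, numOrbits]
    constructor
    · intro h
      rw [Set.ncard_eq_one] at h
      obtain ⟨s, hs⟩ := h
      intro j
      have h0 : {k | π.SameCycle 0 k} ∈ {s : Set (Fin (m+1)) | ∃ i, s = {j | π.SameCycle i j}} :=
        ⟨0, rfl⟩
      have hj : {k | π.SameCycle j k} ∈ {s : Set (Fin (m+1)) | ∃ i, s = {j | π.SameCycle i j}} :=
        ⟨j, rfl⟩
      rw [hs] at h0 hj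
      have heq : {k | π.SameCycle 0 k} = {k | π.SameCycle j k} := h0.trans hj.symm
      have : j ∈ {k | π.SameCycle j k} := Equiv.Perm.SameCycle.refl π j
      rw [← heq] at this
      exact this
    · intro hfull
      have hall : ∀ i j : Fin (m+1), π.SameCycle i j :=
        fun i j => (hfull i).symm.trans (hfull j)
      have : {s : Set (Fin (m+1)) | ∃ i, s = {j | π.SameCycle i j}} = {Set.univ} := by
        ext s
        simp only [Set.mem_setOf_eq, Set.mem_singleton_iff]
        constructor
        · rintro ⟨i, rfl⟩
          ext j
          simp [hall i j]
        · rintro rfl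
          refine ⟨0, ?_⟩
          ext j
          simp [hfull j]
      rw [this]
      exact Set.ncard_singleton _
  have hcount := card_single_cycle_perms (m := m)
  constructor
  · rw [hsets, hcount]
    rw [Nat.factorial_succ]
    have h1 : (0:ℝ) < m.factorial := by exact_mod_cast m.factorial_pos
    have h2 : (0:ℝ) < (m:ℝ) + 1 := by positivity
    push_cast
    field_simp
  · rw [hsets2, hcount]
    simp
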